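/- Let p be a prime and K = ZMod p. For any a, c ∈ K and either sign ε ∈ {1, -1}, define d : ℕ → K by d_{-1} = 0 and d_m = ε·(d_{m-1} - a - m·c) for m ≥ 0. Then there exists m ∈ ℕ with m ≤ 2p - 1 and d_m = 0. In particular the set {m : d_m = 0} is nonempty, so its infimum is finite. -/
import Mathlib


theorem stmt_10 (p : ℕ) (hp : p.Prime) (a c ε : ZMod p)
    (hε : ε = 1 ∨ ε = -1) (d : ℕ → ZMod p)
    (hd0 : d 0 = ε * (-a))
    (hds : ∀ m : ℕ, d (m + 1) = ε * (d m - a - (m + 1) • c)) :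
    ∃ m : ℕ, m ≤ 2 * p - 1 ∧ d m = 0 := by
  have hp1 : 1 ≤ p := hp.one_lt.le
  refine ⟨2 * p - 1, le_refl _, ?_⟩
  rcases hε with hε | hε
  · -- ε = 1 : closed form d m = -(m+1)a - (∑ i<m+1, i) c
    have key : ∀ m : ℕ, d m = -(((m+1 : ℕ) : ZMod p) * a)
        - ((∑ i ∈ Finset.range (m+1), i : ℕ) : ZMod p) * c := by
      intro m
      induction m with
      | zero => simp [hd0, hε]
      | succ n ih =>
        rw [hds n, ih, hε, nsmul_eq_mul]
        simp only [Finset.sum_range_succ]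
        push_cast
        ring
    rw [key]
    have h1 : 2 * p - 1 + 1 = 2 * p := by omega
    have h2 : (∑ i ∈ Finset.range (2 * p), i) = p * (2 * p - 1) := by
      have h := Finset.sum_range_id_mul_two (2 * p)
      have h' : (∑ i ∈ Finset.range (2 * p), i) * 2 = (p * (2 * p - 1)) * 2 := by
        rw [h]; ring
      exact Nat.eq_of_mul_eq_mul_right (by norm_num) h'
    rw [h1, h2]
    have hpz : ((p : ℕ) : ZMod p) = 0 := ZMod.natCast_self p
    push_cast
    rw [hpz]
    ring
  · -- ε = -1 : d(2k) = a + k c, d(2k+1) = (k+1) c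
    have key : ∀ k : ℕ, d (2*k) = a + (k : ZMod p) * c ∧
        d (2*k+1) = ((k+1 : ℕ) : ZMod p) * c := by
      intro k
      induction k with
      | zero =>
        constructor
        · simpa [hε] using hd0
        · have := hds 0
          rw [hd0, hε] at this
          simp at this
          simpa using this
      | succ n ih =>
        have h1 : 2 * (n+1) = (2*n+1) + 1 := by ring
        have h2 : d (2*(n+1)) = a + ((n+1 : ℕ) : ZMod p) * c := by
          rw [h1, hds, ih.2, hε, nsmul_eq_mul]
          push_cast
          ring
        refine ⟨h2, ?_⟩
        rw [hds, h2, hε, nsmul_eq_mul]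
        push_cast
        ring
    have h3 : 2 * p - 1 = 2 * (p - 1) + 1 := by omega
    rw [h3, (key (p-1)).2]
    have h4 : ((p - 1 + 1 : ℕ) : ZMod p) = 0 := by
      rw [Nat.sub_add_cancel hp1]; exact ZMod.natCast_self p
    rw [h4, zero_mul]
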